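/- For every natural number j ≥ 1 and integer n ≥ j, the unsigned Stirling number of the first kind evaluated at negative arguments via polynomial extension satisfies s(-ℓ, -ℓ-j) = S(ℓ+j, ℓ) for all integers ℓ ≥ 1, i.e., if q_j is the unique polynomial of degree 2j with q_j(m) = s(m, m-j) for all sufficiently large natural numbers m, then q_j(-ℓ) = S(ℓ+j, ℓ). -/

import Mathlib

open Polynomial

/-- Unsigned Stirling numbers of the first kind. -/
def stirling1 : ℕ → ℕ → ℕ
  | 0, 0 => 1
  | 0, _+1 => 0
  | _+1, 0 => 0
  | n+1, k+1 => stirling1 n k + n * stirling1 n (k+1)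

/-- Stirling numbers of the second kind. -/
def stirling2 : ℕ → ℕ → ℕ
  | 0, 0 => 1
  | 0, _+1 => 0
  | _+1, 0 => 0
  | n+1, k+1 => stirling2 n k + (k+1) * stirling2 n (k+1)

lemma stirling1_self : ∀ n, stirling1 n n = 1
  | 0 => rfl
  | n+1 => by
    have h : ∀ m k, m < k → stirling1 m k = 0 := by
      intro m
      induction m with
      | zero => intro k hk; cases k with
        | zero => omega
        | succ k => rfl
      | succ m ih =>
        intro k hk
        cases k with
        | zero => omega
        | succ k =>
          show stirling1 m k + m * stirling1 m (k+1) = 0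
          rw [ih k (by omega), ih (k+1) (by omega)]; ring
    show stirling1 n n + n * stirling1 n (n+1) = 1
    rw [stirling1_self n, h n (n+1) (by omega)]; ring

lemma stirling2_self : ∀ n, stirling2 n n = 1
  | 0 => rfl
  | n+1 => by
    have h : ∀ m k, m < k → stirling2 m k = 0 := by
      intro m
      induction m with
      | zero => intro k hk; cases k with
        | zero => omega
        | succ k => rfl
      | succ m ih =>
        intro k hk
        cases k with
        | zero => omega
        | succ k =>
          show stirling2 m k + (k+1) * stirling2 m (k+1) = 0
          rw [ih k (by omega), ih (k+1) (by omega)]; ring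
    show stirling2 n n + (n+1) * stirling2 n (n+1) = 1
    rw [stirling2_self n, h n (n+1) (by omega)]; ring

lemma stirling1_diag (m j : ℕ) (hm : 1 ≤ m) :
    stirling1 (m+1) (m + 1 - (j+1)) = stirling1 m (m - (j+1)) + m * stirling1 m (m - j) := by
  rcases Nat.lt_or_ge m (j+1) with h | h
  · have e1 : m - (j+1) = 0 := by omega
    have e2 : m - j = 0 := by omega
    have e3 : m + 1 - (j+1) = 0 := by omega
    rw [e1, e2, e3]
    obtain ⟨m', rfl⟩ : ∃ m', m = m' + 1 := ⟨m - 1, by omega⟩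
    simp [stirling1]
  · have e2 : m - j = (m - (j+1)) + 1 := by omega
    have e3 : m + 1 - (j+1) = (m - (j+1)) + 1 := by omega
    rw [e2, e3]
    rfl

lemma descPoch_step (n : ℕ) :
    (descPochhammer ℚ (n+1)).comp (X + 1) - descPochhammer ℚ (n+1)
      = ((n : ℚ[X]) + 1) * descPochhammer ℚ n := by
  induction n with
  | zero =>
    simp [descPochhammer_one]
  | succ n ih =>
    have ih' : (descPochhammer ℚ (n+1)).comp (X+1)
        = ((n : ℚ[X]) + 1) * descPochhammer ℚ n + descPochhammer ℚ (n+1) := by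
      rw [← ih]; ring
    have h1 := descPochhammer_succ_right ℚ n
    rw [descPochhammer_succ_right ℚ (n+1), mul_comp, sub_comp, X_comp, natCast_comp, ih', h1]
    push_cast
    ring

/-- Discrete antiderivative of a polynomial. -/
lemma exists_antidiff : ∀ (n : ℕ) (p : ℚ[X]), p.natDegree ≤ n →
    ∃ Q : ℚ[X], ∀ x : ℚ, Q.eval (x+1) = Q.eval x + p.eval x := by
  intro n
  induction n with
  | zero =>
    intro p hp
    obtain ⟨c, rfl⟩ := Polynomial.natDegree_eq_zero.mp (Nat.le_zero.mp hp)
    exact ⟨C c * X, fun x => by simp; ring⟩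
  | succ n ih =>
    intro p hp
    rcases Nat.lt_or_ge p.natDegree (n+1) with h | h
    · exact ih p (by omega)
    have hdeg : p.natDegree = n + 1 := le_antisymm hp h
    have hp0 : p ≠ 0 := fun h0 => by simp [h0] at hdeg
    set c := p.leadingCoeff with hc
    have hcne : c ≠ 0 := leadingCoeff_ne_zero.mpr hp0
    set Q0 : ℚ[X] := C (c / (n+2)) * descPochhammer ℚ (n+2) with hQ0def
    have hQ0 : Q0.comp (X+1) - Q0 = C c * descPochhammer ℚ (n+1) := by
      rw [hQ0def, mul_comp, C_comp, ← mul_sub, descPoch_step (n+1)]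
      have hcast : ((n+1 : ℕ) : ℚ[X]) + 1 = C ((n : ℚ) + 2) := by
        have h2 : ((n : ℚ) + 2) = ((n+2 : ℕ) : ℚ) := by push_cast; ring
        rw [h2, C_eq_natCast]
        push_cast; ring
      rw [hcast, ← mul_assoc, ← C_mul]
      congr 1
      field_simp
    set d : ℚ[X] := C c * descPochhammer ℚ (n+1) with hd
    have hdne : d ≠ 0 := by
      simp only [hd, ne_eq, mul_eq_zero, C_eq_zero]
      push_neg
      exact ⟨hcne, (monic_descPochhammer ℚ (n+1)).ne_zero⟩
    have hddeg : d.natDegree = n + 1 := by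
      rw [hd, natDegree_C_mul hcne, descPochhammer_natDegree]
    have hdlc : d.leadingCoeff = c := by
      rw [hd, leadingCoeff_mul, leadingCoeff_C, (monic_descPochhammer ℚ (n+1)).leadingCoeff,
        mul_one]
    set r : ℚ[X] := p - d with hr
    have hrdeg : r.natDegree ≤ n := by
      rcases eq_or_ne r 0 with h0 | h0
      · simp [h0]
      have : r.degree < p.degree := by
        apply degree_sub_lt _ hp0 (by rw [hdlc])
        rw [degree_eq_natDegree hp0, degree_eq_natDegree hdne, hdeg, hddeg]
      have := natDegree_lt_natDegree h0 this
      omega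
    obtain ⟨Q1, hQ1⟩ := ih r hrdeg
    refine ⟨Q0 + Q1, fun x => ?_⟩
    have e0 : Q0.eval (x+1) = Q0.eval x + d.eval x := by
      have := congrArg (eval x) hQ0
      simpa [eval_comp, sub_eq_iff_eq_add'] using this
    have e1 : Q1.eval (x+1) = Q1.eval x + r.eval x := hQ1 x
    have : r.eval x = p.eval x - d.eval x := by simp [hr]
    simp only [eval_add, e0, e1, this]
    ring

lemma stirling_poly : ∀ j : ℕ, ∃ q : ℚ[X],
    (∀ m : ℕ, 1 ≤ m → q.eval (m : ℚ) = stirling1 m (m - j)) ∧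
    (∀ ℓ : ℕ, q.eval (-(ℓ : ℚ)) = stirling2 (ℓ + j) ℓ) := by
  intro j
  induction j with
  | zero =>
    refine ⟨1, fun m hm => ?_, fun ℓ => ?_⟩
    · simp [stirling1_self]
    · simp [stirling2_self]
  | succ j ihj =>
    obtain ⟨q', hpos, hneg⟩ := ihj
    obtain ⟨Q, hQ⟩ := exists_antidiff (X * q').natDegree (X * q') le_rfl
    set q : ℚ[X] := Q - C (Q.eval 1) with hqdef
    have hstep : ∀ x : ℚ, q.eval (x+1) = q.eval x + x * q'.eval x := by
      intro x
      have := hQ x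
      simp only [eval_mul, eval_X] at this
      simp [hqdef, this]
      ring
    have hq1 : q.eval 1 = 0 := by simp [hqdef]
    have hq0 : q.eval 0 = 0 := by
      have h := hstep 0
      norm_num at h
      rw [← h]
      exact hq1
    have hposq : ∀ m : ℕ, 1 ≤ m → q.eval (m : ℚ) = stirling1 m (m - (j+1)) := by
      intro m hm
      induction m, hm using Nat.le_induction with
      | base =>
        simpa [show stirling1 1 0 = 0 from rfl] using hq1
      | succ m hm ih =>
        have hs := hstep (m : ℚ)
        have hc : ((m+1 : ℕ) : ℚ) = (m : ℚ) + 1 := by push_cast; ring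
        rw [hc, hs, ih, hpos m hm, stirling1_diag m j hm]
        push_cast; ring
    have hnegq : ∀ ℓ : ℕ, q.eval (-(ℓ : ℚ)) = stirling2 (ℓ + (j+1)) ℓ := by
      intro ℓ
      induction ℓ with
      | zero =>
        have : stirling2 (0 + (j+1)) 0 = 0 := by
          rw [Nat.zero_add]; rfl
        rw [this]; simpa using hq0
      | succ ℓ ih =>
        have hs := hstep (-(ℓ:ℚ) - 1)
        have hx : (-(ℓ:ℚ) - 1) + 1 = -(ℓ:ℚ) := by ring
        rw [hx, ih] at hs
        have hval : q.eval (-(ℓ:ℚ) - 1)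
            = (stirling2 (ℓ + (j+1)) ℓ : ℚ) + ((ℓ:ℚ)+1) * q'.eval (-(ℓ:ℚ)-1) := by
          rw [eq_sub_of_add_eq hs.symm]; ring
        have hcast : -((ℓ+1 : ℕ) : ℚ) = -(ℓ:ℚ) - 1 := by push_cast; ring
        have hq'val : q'.eval (-(ℓ:ℚ)-1) = stirling2 (ℓ + 1 + j) (ℓ+1) := by
          rw [← hcast]; exact hneg (ℓ+1)
        rw [hcast, hval, hq'val]
        have hrec : stirling2 (ℓ + (j+1) + 1) (ℓ + 1)
            = stirling2 (ℓ + (j+1)) ℓ + (ℓ+1) * stirling2 (ℓ + (j+1)) (ℓ+1) := rfl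
        have e1 : ℓ + 1 + (j+1) = ℓ + (j+1) + 1 := by omega
        have e2 : ℓ + 1 + j = ℓ + (j+1) := by omega
        rw [e1, hrec, e2]
        push_cast; ring
    exact ⟨q, hposq, hnegq⟩

/-- Stirling duality `s(-ℓ, -ℓ-j) = S(ℓ+j, ℓ)`: for `j ≥ 1`, if `q` is the (unique)
polynomial of degree (at most) `2j` with `q(m) = s(m, m-j)` for all sufficiently large
natural numbers `m`, then `q(-ℓ) = S(ℓ+j, ℓ)` for every `ℓ ≥ 1`. -/
theorem stirling1Poly_eval_neg (j : ℕ) (hj : 1 ≤ j) (q : Polynomial ℚ)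
    (hdeg : q.degree ≤ 2 * j)
    (hq : ∃ M : ℕ, ∀ m : ℕ, M ≤ m → q.eval (m : ℚ) = stirling1 m (m - j)) :
    ∀ ℓ : ℕ, 1 ≤ ℓ → q.eval (-(ℓ : ℚ)) = stirling2 (ℓ + j) ℓ := by
  obtain ⟨M, hM⟩ := hq
  obtain ⟨q₀, h₀pos, h₀neg⟩ := stirling_poly j
  have hqq : q = q₀ := by
    apply Polynomial.eq_of_infinite_eval_eq
    apply Set.Infinite.mono (s := Set.range (fun m : ℕ => ((m + M + 1 : ℕ) : ℚ)))
    · rintro x ⟨m, rfl⟩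
      simp only [Set.mem_setOf_eq]
      rw [hM (m + M + 1) (by omega), h₀pos (m + M + 1) (by omega)]
    · apply Set.infinite_range_of_injective
      intro a b hab
      simp only at hab
      have h2 : a + M + 1 = b + M + 1 := by exact_mod_cast hab
      omega
  intro ℓ hℓ
  rw [hqq]
  exact h₀neg ℓ
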